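/- For every vertex u of the exceptional graph Y, there exists a vertex v ≠ u such that the subgraph of Y induced by V(Y) \ ({u} ∪ N[v]) is isomorphic to the path P3 on three vertices. -/

import Mathlib

open SimpleGraph

/-- `H` is contained in `G` as a (not necessarily induced) subgraph. -/
def ContainsSub {V : Type*} {W : Type*} (G : SimpleGraph V) (H : SimpleGraph W) : Prop :=
  ∃ f : W → V, Function.Injective f ∧ ∀ a b, H.Adj a b → G.Adj (f a) (f b)

/-- The diamond graph `B₂`: `K₄` minus one edge. -/
def Diamond : SimpleGraph (Fin 4) :=
  (completeGraph (Fin 4)).deleteEdges {s(0, 1)}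

/-- A graph is diamond-free if it contains no subgraph isomorphic to the diamond. -/
def DiamondFree {V : Type*} (G : SimpleGraph V) : Prop := ¬ ContainsSub G Diamond

/-- The closed neighborhood `N[S]` of a set of vertices. -/
def closedNbhd {V : Type*} (G : SimpleGraph V) (S : Set V) : Set V :=
  {v | v ∈ S ∨ ∃ u ∈ S, G.Adj u v}

/-- `S` is a `B₂`-isolating set of `G`. -/
def IsIsolatingB2 {V : Type*} (G : SimpleGraph V) (S : Set V) : Prop :=
  DiamondFree (G.induce (closedNbhd G S)ᶜ)

/-- The `B₂`-isolation number `ι(G, B₂)`. -/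
noncomputable def iotaB2 {V : Type*} (G : SimpleGraph V) : ℕ :=
  sInf {k | ∃ S : Set V, IsIsolatingB2 G S ∧ S.ncard = k}

/-- The exceptional graph `Y`: the square of the 9-cycle (4-regular on 9 vertices). -/
def Ygraph : SimpleGraph (ZMod 9) :=
  SimpleGraph.fromRel (fun a b => a - b = 1 ∨ a - b = 2)


lemma Yadj_iff (a b : ZMod 9) : Ygraph.Adj a b ↔
    a ≠ b ∧ ((a - b = 1 ∨ a - b = 2) ∨ (b - a = 1 ∨ b - a = 2)) := by
  simp [Ygraph, SimpleGraph.fromRel_adj]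

instance : DecidableRel Ygraph.Adj := fun a b =>
  decidable_of_iff _ (Yadj_iff a b).symm

lemma Yadj_trans (u a b : ZMod 9) : Ygraph.Adj (u + a) (u + b) ↔ Ygraph.Adj a b := by
  simp [Yadj_iff, add_sub_add_left_eq_sub]

lemma mem_set_iff (u v x : ZMod 9) :
    x ∈ ({u} ∪ closedNbhd Ygraph {v})ᶜ ↔ x ≠ u ∧ x ≠ v ∧ ¬ Ygraph.Adj v x := by
  simp [closedNbhd]

lemma classify (u x : ZMod 9) (hx : x ∈ ({u} ∪ closedNbhd Ygraph {u + 4})ᶜ) :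
    x = u + 1 ∨ x = u + 7 ∨ x = u + 8 := by
  rw [mem_set_iff] at hx
  obtain ⟨d, rfl⟩ : ∃ d, x = u + d := ⟨x - u, by ring⟩
  obtain ⟨h1, h2, h3⟩ := hx
  have hd1 : d ≠ 0 := by simpa using h1
  have hd2 : d ≠ 4 := by simpa using h2
  have hd3 : ¬ Ygraph.Adj 4 d := by rw [Yadj_trans] at h3; exact h3
  have key : ∀ d : ZMod 9, d ≠ 0 → d ≠ 4 → ¬ Ygraph.Adj 4 d →
      d = 1 ∨ d = 7 ∨ d = 8 := by decide
  rcases key d hd1 hd2 hd3 with h | h | h <;> simp [h]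

theorem Ygraph_induced_P3 :
    ∀ u : ZMod 9, ∃ v : ZMod 9, v ≠ u ∧
      Nonempty ((Ygraph.induce ({u} ∪ closedNbhd Ygraph {v})ᶜ) ≃g SimpleGraph.pathGraph 3) := by
  intro u
  have n40 : (4 : ZMod 9) ≠ 0 := by decide
  have n70 : (7 : ZMod 9) ≠ 0 := by decide
  have n74 : (7 : ZMod 9) ≠ 4 := by decide
  have n80 : (8 : ZMod 9) ≠ 0 := by decide
  have n84 : (8 : ZMod 9) ≠ 4 := by decide
  have n10 : (1 : ZMod 9) ≠ 0 := by decide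
  have n14 : (1 : ZMod 9) ≠ 4 := by decide
  have n87 : (8 : ZMod 9) ≠ 7 := by decide
  have n17 : (1 : ZMod 9) ≠ 7 := by decide
  have n18 : (1 : ZMod 9) ≠ 8 := by decide
  refine ⟨u + 4, by simp [n40], ⟨?_⟩⟩
  have h7 : (u + 7) ∈ ({u} ∪ closedNbhd Ygraph {u + 4})ᶜ := by
    rw [mem_set_iff]
    refine ⟨by simp [n70], by simp [n74], ?_⟩
    rw [Yadj_trans]; decide
  have h8 : (u + 8) ∈ ({u} ∪ closedNbhd Ygraph {u + 4})ᶜ := by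
    rw [mem_set_iff]
    refine ⟨by simp [n80], by simp [n84], ?_⟩
    rw [Yadj_trans]; decide
  have h1 : (u + 1) ∈ ({u} ∪ closedNbhd Ygraph {u + 4})ᶜ := by
    rw [mem_set_iff]
    refine ⟨by simp [n10], by simp [n14], ?_⟩
    rw [Yadj_trans]; decide
  refine RelIso.symm ⟨⟨![⟨u + 7, h7⟩, ⟨u + 8, h8⟩, ⟨u + 1, h1⟩],
    fun x => if x.1 = u + 7 then 0 else if x.1 = u + 8 then 1 else 2, ?_, ?_⟩, ?_⟩
  · intro i
    fin_cases i <;> simp [n87, n17, n18]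
  · rintro ⟨x, hx⟩
    rcases classify u x hx with h | h | h <;> subst h <;> simp [n87, n17, n18]
  · intro a b
    fin_cases a <;> fin_cases b <;>
      simp [pathGraph_adj, comap_adj, Yadj_trans] <;> first | exact (Yadj_trans u _ _).mpr (by decide) | exact fun h => absurd ((Yadj_trans u _ _).mp h) (by decide)
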